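/- Let G be a Cameron–Walker graph on n vertices with bipartite base on {u_1,…,u_m} ⊔ {w_1,…,w_p}, pendant edges at each u_i and t_j ≥ 0 pendant triangles at each w_j, and let r = m + Σ t_j be the regularity of R/I(G). Then the v-number of I(G) satisfies v(I(G)) ≤ min{r − 1, n − 2r}. -/

import Mathlib

open MvPolynomial

namespace PaperRV

variable {V : Type*}

/-- `A` is an independent set of `G`. -/
def IsIndep (G : SimpleGraph V) (A : Set V) : Prop :=
  ∀ u ∈ A, ∀ v ∈ A, ¬ G.Adj u v

/-- The neighbourhood `N_G(A)` of a set of vertices `A`. -/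
def nbhd (G : SimpleGraph V) (A : Set V) : Set V :=
  {v | ∃ u ∈ A, G.Adj u v}

/-- `C` is a vertex cover of `G`. -/
def IsVertexCover (G : SimpleGraph V) (C : Set V) : Prop :=
  ∀ ⦃u v⦄, G.Adj u v → u ∈ C ∨ v ∈ C

/-- The v-number of (the edge ideal of) `G`: the minimum cardinality of an independent
set `A` such that `N_G(A)` is a vertex cover of `G`. -/
noncomputable def vNumber (G : SimpleGraph V) [Fintype V] : ℕ :=
  sInf {k | ∃ A : Finset V, IsIndep G ↑A ∧ IsVertexCover G (nbhd G ↑A) ∧ A.card = k}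

/-- `G` is a star graph: all edges pass through a common center. -/
def IsStar (G : SimpleGraph V) : Prop :=
  ∃ c, ∀ u v, G.Adj u v → u = c ∨ v = c

/-- `G` is a star triangle: pendant triangles attached to a common center `c`, i.e. every
vertex other than `c` is adjacent to `c` and to exactly one other non-center vertex. -/
def IsStarTriangle (G : SimpleGraph V) : Prop :=
  ∃ c, ∀ v, v ≠ c → G.Adj c v ∧ ∃! w, w ≠ c ∧ G.Adj v w

/-- Vertex set of a Cameron–Walker graph: base bipartition `Fin m ⊔ Fin p`, `s i` pendant
(whisker) vertices attached to the `i`-th left vertex `u_i`, and `t j` pendant triangles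
(each contributing two new vertices) attached to the `j`-th right vertex `w_j`. -/
abbrev CWVert (m p : ℕ) (s : Fin m → ℕ) (t : Fin p → ℕ) : Type :=
  (Fin m ⊕ Fin p) ⊕ ((Σ i : Fin m, Fin (s i)) ⊕ (Σ j : Fin p, Fin (t j) × Fin 2))

/-- The Cameron–Walker graph with connected bipartite base given by the relation `E` on
`Fin m × Fin p`, `s i ≥ 1` pendant edges at each `u_i` and `t j ≥ 0` pendant triangles
at each `w_j`. -/
def cwGraph (m p : ℕ) (s : Fin m → ℕ) (t : Fin p → ℕ) (E : Fin m → Fin p → Prop) :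
    SimpleGraph (CWVert m p s t) :=
  SimpleGraph.fromRel (fun a b =>
    (∃ u w, E u w ∧ a = Sum.inl (Sum.inl u) ∧ b = Sum.inl (Sum.inr w)) ∨
    (∃ i x, a = Sum.inl (Sum.inl i) ∧ b = Sum.inr (Sum.inl ⟨i, x⟩)) ∨
    (∃ j y c, a = Sum.inl (Sum.inr j) ∧ b = Sum.inr (Sum.inr ⟨j, (y, c)⟩)) ∨
    (∃ j y, a = Sum.inr (Sum.inr ⟨j, (y, 0)⟩) ∧ b = Sum.inr (Sum.inr ⟨j, (y, 1)⟩)))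

/-- The bipartite base graph on `Fin m ⊔ Fin p`. -/
def cwBase (m p : ℕ) (E : Fin m → Fin p → Prop) : SimpleGraph (Fin m ⊕ Fin p) :=
  SimpleGraph.fromRel (fun a b => ∃ u w, E u w ∧ a = Sum.inl u ∧ b = Sum.inr w)

/-- The edge ideal `I(G) = ⟨x_u x_v : {u,v} ∈ E(G)⟩` of `G` in `K[x_v : v ∈ V]`. -/
noncomputable def edgeIdeal (K : Type*) [Field K] (G : SimpleGraph V) : Ideal (MvPolynomial V K) :=
  Ideal.span {q | ∃ u v, G.Adj u v ∧ q = X u * X v}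

/-- A finite graded free resolution `0 → F_len → ⋯ → F_1 → F_0 → I → 0` of the ideal `I`
by graded free modules `F i = ⊕_a R(-shift i a)` (so, prepending `R → R/I`, the `F i` form a
graded free resolution of `R/I` shifted by one homological degree). -/
structure GradedFreeResolution (K : Type*) [Field K] (V : Type*)
    (I : Ideal (MvPolynomial V K)) where
  len : ℕ
  rank : ℕ → ℕ
  fin_len : ∀ i, len < i → rank i = 0
  shift : (i : ℕ) → Fin (rank i) → ℕ
  aug : (Fin (rank 0) → MvPolynomial V K) →ₗ[MvPolynomial V K] MvPolynomial V K
  maps : (i : ℕ) →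
    ((Fin (rank (i + 1)) → MvPolynomial V K) →ₗ[MvPolynomial V K] (Fin (rank i) → MvPolynomial V K))
  aug_graded : ∀ a, (aug (Pi.single a 1)).IsHomogeneous (shift 0 a)
  maps_graded : ∀ i a j, ((maps i (Pi.single a 1)) j).IsHomogeneous (shift (i + 1) a - shift i j)
  maps_vanish : ∀ i a j, shift (i + 1) a < shift i j → (maps i (Pi.single a 1)) j = 0
  range_aug : LinearMap.range aug = I
  exact_aug : LinearMap.ker aug = LinearMap.range (maps 0)
  exact_chain : ∀ i, LinearMap.ker (maps i) = LinearMap.range (maps (i + 1))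

/-- The Castelnuovo–Mumford regularity of `R/I` for a nonzero proper homogeneous ideal `I`
generated in positive degrees: since the `F i` above resolve the `(i+1)`-st homological step of
the minimal graded free resolution of `R/I` (whose 0-th step is `R`, contributing `0 - 0 = 0`),
and since the twists of any graded free resolution dominate those of the minimal one,
`reg(R/I) = inf { r | some graded free resolution of I has all shifts `shift i a ≤ r + (i + 1)` }`. -/
noncomputable def regQuot (K : Type*) [Field K] {V : Type*} (I : Ideal (MvPolynomial V K)) : ℕ :=
  sInf {r | ∃ F : GradedFreeResolution K V I, ∀ i a, F.shift i a ≤ r + i + 1}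

/-- `reg K G` is the Castelnuovo–Mumford regularity of `R/I(G)`, `R = K[x_v : v ∈ V]`. -/
noncomputable def reg (K : Type*) [Field K] (G : SimpleGraph V) : ℕ :=
  regQuot K (edgeIdeal K G)


section Aux

variable {m p : ℕ} {s : Fin m → ℕ} {t : Fin p → ℕ} {E : Fin m → Fin p → Prop}

lemma base_adj_cases {a b : Fin m ⊕ Fin p} (h : (cwBase m p E).Adj a b) :
    (∃ u w, E u w ∧ a = Sum.inl u ∧ b = Sum.inr w) ∨
    (∃ u w, E u w ∧ a = Sum.inr w ∧ b = Sum.inl u) := by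
  simp only [cwBase, SimpleGraph.fromRel_adj] at h
  rcases h.2 with ⟨u, w, hE, h1, h2⟩ | ⟨u, w, hE, h1, h2⟩
  · exact Or.inl ⟨u, w, hE, h1, h2⟩
  · exact Or.inr ⟨u, w, hE, h2, h1⟩

lemma cw_walk_aux (h1 : ∀ (j : Fin p) (i i' : Fin m), E i j → E i' j → i = i') :
    ∀ {a b : Fin m ⊕ Fin p}, (cwBase m p E).Walk a b →
      ∀ i' : Fin m, b = Sum.inl i' →
        (∀ i, a = Sum.inl i → i = i') ∧ (∀ j i, a = Sum.inr j → E i j → i = i') := by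
  intro a b w
  induction w with
  | nil =>
    intro i' hb
    refine ⟨fun i hi => ?_, fun j i hj hE => ?_⟩
    · rw [hb] at hi; exact Sum.inl.inj hi.symm
    · rw [hb] at hj; simp at hj
  | @cons x y z h w ih =>
    intro i' hb
    rcases base_adj_cases h with ⟨u, w₀, hE, ha, hc⟩ | ⟨u, w₀, hE, ha, hc⟩
    · refine ⟨fun i hi => ?_, fun j i hj hE' => ?_⟩
      · have hiu : i = u := by rw [ha] at hi; exact (Sum.inl.inj hi).symm
        have := (ih i' hb).2 w₀ u hc hE
        exact hiu.trans this
      · rw [ha] at hj; simp at hj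
    · refine ⟨fun i hi => ?_, fun j i hj hE' => ?_⟩
      · rw [ha] at hi; simp at hi
      · have hjw : j = w₀ := by rw [ha] at hj; exact (Sum.inr.inj hj).symm
        have hu : u = i' := (ih i' hb).1 u hc
        exact (h1 w₀ i u (hjw ▸ hE') hE).trans hu

lemma adj_UW {u : Fin m} {w : Fin p} (hE : E u w) :
    (cwGraph m p s t E).Adj (Sum.inl (Sum.inl u)) (Sum.inl (Sum.inr w)) := by
  simp only [cwGraph, SimpleGraph.fromRel_adj]
  exact ⟨by simp, Or.inl (Or.inl ⟨u, w, hE, rfl, rfl⟩)⟩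

lemma adj_UX (i : Fin m) (x : Fin (s i)) :
    (cwGraph m p s t E).Adj (Sum.inl (Sum.inl i)) (Sum.inr (Sum.inl ⟨i, x⟩)) := by
  simp only [cwGraph, SimpleGraph.fromRel_adj]
  exact ⟨by simp, Or.inl (Or.inr (Or.inl ⟨i, x, rfl, rfl⟩))⟩

lemma adj_WY (j : Fin p) (y : Fin (t j)) (c : Fin 2) :
    (cwGraph m p s t E).Adj (Sum.inl (Sum.inr j)) (Sum.inr (Sum.inr ⟨j, (y, c)⟩)) := by
  simp only [cwGraph, SimpleGraph.fromRel_adj]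
  exact ⟨by simp, Or.inl (Or.inr (Or.inr (Or.inl ⟨j, y, c, rfl, rfl⟩)))⟩

lemma nadj_WW (j j' : Fin p) :
    ¬ (cwGraph m p s t E).Adj (Sum.inl (Sum.inr j)) (Sum.inl (Sum.inr j')) := by
  simp [cwGraph, SimpleGraph.fromRel_adj]

lemma nadj_WX (j : Fin p) (i : Fin m) (x : Fin (s i)) :
    ¬ (cwGraph m p s t E).Adj (Sum.inl (Sum.inr j)) (Sum.inr (Sum.inl ⟨i, x⟩)) := by
  simp [cwGraph, SimpleGraph.fromRel_adj]

lemma nadj_XX (i : Fin m) (x : Fin (s i)) (i' : Fin m) (x' : Fin (s i')) :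
    ¬ (cwGraph m p s t E).Adj (Sum.inr (Sum.inl ⟨i, x⟩)) (Sum.inr (Sum.inl ⟨i', x'⟩)) := by
  simp [cwGraph, SimpleGraph.fromRel_adj]

/-- Generic witness construction: for any `J : Finset (Fin p)` containing all `j` with a
pendant triangle and `B : Finset (Fin m)` containing all `i` with no base neighbour in `J`,
the set `{w_j : j ∈ J} ∪ {one pendant of u_i : i ∈ B}` is independent and its
neighbourhood is a vertex cover. -/
lemma cw_witness (hs : ∀ i, 1 ≤ s i)
    (J : Finset (Fin p)) (hJ : ∀ j, 1 ≤ t j → j ∈ J)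
    (B : Finset (Fin m)) (hB : ∀ i, (¬ ∃ j ∈ J, E i j) → i ∈ B) :
    ∃ A : Finset (CWVert m p s t), IsIndep (cwGraph m p s t E) ↑A ∧
      IsVertexCover (cwGraph m p s t E) (nbhd (cwGraph m p s t E) ↑A) ∧
      A.card ≤ J.card + B.card := by
  classical
  set A : Finset (CWVert m p s t) :=
    J.image (fun j => (Sum.inl (Sum.inr j) : CWVert m p s t)) ∪
    B.image (fun i => (Sum.inr (Sum.inl ⟨i, ⟨0, hs i⟩⟩) : CWVert m p s t)) with hA
  refine ⟨A, ?_, ?_, ?_⟩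
  · -- independence
    intro u hu v hv
    simp only [hA, Finset.coe_union, Set.mem_union, Finset.coe_image, Set.mem_image,
      Finset.mem_coe] at hu hv
    rcases hu with ⟨j, -, rfl⟩ | ⟨i, -, rfl⟩ <;> rcases hv with ⟨j', -, rfl⟩ | ⟨i', -, rfl⟩
    · exact nadj_WW j j'
    · exact nadj_WX j i' _
    · exact fun h => nadj_WX j' i _ h.symm
    · exact nadj_XX i _ i' _
  · -- vertex cover
    have hWmem : ∀ j ∈ J, (Sum.inl (Sum.inr j) : CWVert m p s t) ∈ (↑A : Set _) := by
      intro j hj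
      rw [Finset.mem_coe, hA]
      exact Finset.mem_union_left _ (Finset.mem_image_of_mem _ hj)
    have hXmem : ∀ i ∈ B,
        (Sum.inr (Sum.inl ⟨i, ⟨0, hs i⟩⟩) : CWVert m p s t) ∈ (↑A : Set _) := by
      intro i hi
      rw [Finset.mem_coe, hA]
      exact Finset.mem_union_right _ (Finset.mem_image_of_mem _ hi)
    have hU : ∀ i : Fin m, (Sum.inl (Sum.inl i) : CWVert m p s t) ∈
        nbhd (cwGraph m p s t E) ↑A := by
      intro i
      by_cases hc : ∃ j ∈ J, E i j
      · obtain ⟨j, hjJ, hEj⟩ := hc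
        exact ⟨Sum.inl (Sum.inr j), hWmem j hjJ, (adj_UW hEj).symm⟩
      · exact ⟨Sum.inr (Sum.inl ⟨i, ⟨0, hs i⟩⟩), hXmem i (hB i hc), (adj_UX i ⟨0, hs i⟩).symm⟩
    have hY : ∀ (j : Fin p) (y : Fin (t j)) (c : Fin 2),
        (Sum.inr (Sum.inr ⟨j, (y, c)⟩) : CWVert m p s t) ∈
          nbhd (cwGraph m p s t E) ↑A := by
      intro j y c
      exact ⟨Sum.inl (Sum.inr j), hWmem j (hJ j y.pos), adj_WY j y c⟩
    intro a b hadj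
    rw [cwGraph, SimpleGraph.fromRel_adj] at hadj
    obtain ⟨-, h | h⟩ := hadj <;>
      rcases h with ⟨u, w, hE, rfl, rfl⟩ | ⟨i, x, rfl, rfl⟩ | ⟨j, y, c, rfl, rfl⟩ |
        ⟨j, y, rfl, rfl⟩
    · exact Or.inl (hU u)
    · exact Or.inl (hU i)
    · exact Or.inr (hY j y c)
    · exact Or.inl (hY j y 0)
    · exact Or.inr (hU u)
    · exact Or.inr (hU i)
    · exact Or.inl (hY j y c)
    · exact Or.inl (hY j y 1)
  · -- cardinality
    rw [hA]
    calc _ ≤ _ + _ := Finset.card_union_le _ _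
    _ ≤ J.card + B.card := Nat.add_le_add Finset.card_image_le Finset.card_image_le

end Aux

/-- For a Cameron–Walker graph `G` on `n` vertices as above, with `r = m + Σ t_j` the
regularity of `R/I(G)`, the v-number satisfies `v(I(G)) ≤ min {r - 1, n - 2r}`. -/
theorem stmt13 (m p : ℕ) (hm : 1 ≤ m) (hp : 1 ≤ p) (s : Fin m → ℕ) (t : Fin p → ℕ)
    (hs : ∀ i, 1 ≤ s i) (E : Fin m → Fin p → Prop)
    (hbase : (cwBase m p E).Connected)
    (hnotstar : ¬ IsStar (cwGraph m p s t E))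
    (hnotstartri : ¬ IsStarTriangle (cwGraph m p s t E))
    (n r : ℕ) (hn : n = Fintype.card (CWVert m p s t)) (hr : r = m + ∑ j, t j)
    (hreg : ∀ (K : Type) [Field K], reg K (cwGraph m p s t E) = r) :
    vNumber (cwGraph m p s t E) ≤ min (r - 1) (n - 2 * r) := by
  classical
  subst hn; subst hr
  -- every `u_i` has a base neighbour
  have L1 : ∀ i : Fin m, ∃ j, E i j := by
    intro i
    obtain ⟨w⟩ := hbase.preconnected (Sum.inl i) (Sum.inr ⟨0, hp⟩)
    cases w with
    | cons h _ =>
      rcases base_adj_cases h with ⟨u, w₀, hE, ha, -⟩ | ⟨u, w₀, hE, ha, -⟩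
      · obtain rfl := Sum.inl.inj ha
        exact ⟨w₀, hE⟩
      · simp at ha
  -- every `w_j` has a base neighbour
  have L2 : ∀ j : Fin p, ∃ i, E i j := by
    intro j
    obtain ⟨w⟩ := hbase.preconnected (Sum.inr j) (Sum.inl ⟨0, hm⟩)
    cases w with
    | cons h _ =>
      rcases base_adj_cases h with ⟨u, w₀, hE, ha, -⟩ | ⟨u, w₀, hE, ha, -⟩
      · simp at ha
      · obtain rfl := Sum.inr.inj ha
        exact ⟨u, hE⟩
  have key : ∀ k : ℕ, (∃ A : Finset (CWVert m p s t),
      IsIndep (cwGraph m p s t E) ↑A ∧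
      IsVertexCover (cwGraph m p s t E) (nbhd (cwGraph m p s t E) ↑A) ∧ A.card ≤ k) →
      vNumber (cwGraph m p s t E) ≤ k := by
    rintro k ⟨A, h1, h2, h3⟩
    exact le_trans (Nat.sInf_le ⟨A, h1, h2, rfl⟩) h3
  have card_eq : Fintype.card (CWVert m p s t) = m + p + (∑ i, s i) + 2 * ∑ j, t j := by
    have h2 : ∑ j : Fin p, t j * 2 = (∑ j, t j) * 2 := (Finset.sum_mul _ _ _).symm
    simp only [CWVert, Fintype.card_sum, Fintype.card_sigma, Fintype.card_prod,
      Fintype.card_fin]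
    omega
  have hsm : m ≤ ∑ i, s i := by
    calc m = ∑ _i : Fin m, 1 := by simp
    _ ≤ ∑ i, s i := Finset.sum_le_sum (fun i _ => hs i)
  refine le_min ?_ ?_
  · -- vNumber ≤ r - 1
    by_cases hT : ∃ j, 1 ≤ t j
    · -- some pendant triangle exists
      obtain ⟨j1, hj1⟩ := hT
      obtain ⟨i1, hi1⟩ := L2 j1
      set J : Finset (Fin p) := Finset.univ.filter (fun j => 1 ≤ t j) with hJdef
      have hj1J : j1 ∈ J := by rw [hJdef]; exact Finset.mem_filter.mpr ⟨Finset.mem_univ _, hj1⟩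
      have hJcard : J.card ≤ ∑ j, t j := by
        calc J.card = ∑ _j ∈ J, 1 := (Finset.card_eq_sum_ones J)
        _ ≤ ∑ j ∈ J, t j := Finset.sum_le_sum (fun j hj => (Finset.mem_filter.mp hj).2)
        _ ≤ ∑ j, t j := Finset.sum_le_sum_of_subset (Finset.subset_univ J)
      obtain ⟨A, h1, h2, h3⟩ := cw_witness (t := t) (E := E) hs J
        (fun j hj => Finset.mem_filter.mpr ⟨Finset.mem_univ _, hj⟩)
        (Finset.univ.erase i1)
        (fun i hi => Finset.mem_erase.mpr
          ⟨fun h => hi ⟨j1, hj1J, h ▸ hi1⟩, Finset.mem_univ _⟩)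
      apply key
      refine ⟨A, h1, h2, le_trans h3 ?_⟩
      have hB : (Finset.univ.erase i1).card = m - 1 := by
        rw [Finset.card_erase_of_mem (Finset.mem_univ _), Finset.card_univ, Fintype.card_fin]
      omega
    · -- no pendant triangles at all
      have ht : ∀ j, t j = 0 := by
        intro j
        by_contra h
        exact hT ⟨j, by omega⟩
      have hsum0 : ∑ j, t j = 0 := Finset.sum_eq_zero (fun j _ => ht j)
      by_cases hex : ∃ (j : Fin p) (i i' : Fin m), i ≠ i' ∧ E i j ∧ E i' j
      · -- some w_j with two base neighbours
        obtain ⟨j0, i1, i2, hne, hE1, hE2⟩ := hex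
        have hm2 : 2 ≤ m := by
          have h12 : (i1 : ℕ) ≠ (i2 : ℕ) := fun h => hne (Fin.ext h)
          have := i1.isLt
          have := i2.isLt
          omega
        obtain ⟨A, h1, h2, h3⟩ := cw_witness (t := t) (E := E) hs {j0}
          (fun j hj => by rw [ht j] at hj; omega)
          ((Finset.univ.erase i1).erase i2)
          (fun i hi => by
            refine Finset.mem_erase.mpr ⟨?_, Finset.mem_erase.mpr ⟨?_, Finset.mem_univ _⟩⟩
            · exact fun h => hi ⟨j0, Finset.mem_singleton_self j0, h ▸ hE2⟩
            · exact fun h => hi ⟨j0, Finset.mem_singleton_self j0, h ▸ hE1⟩)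
        apply key
        refine ⟨A, h1, h2, le_trans h3 ?_⟩
        have hB : ((Finset.univ.erase i1).erase i2).card = m - 1 - 1 := by
          rw [Finset.card_erase_of_mem
              (Finset.mem_erase.mpr ⟨fun h => hne h.symm, Finset.mem_univ _⟩),
            Finset.card_erase_of_mem (Finset.mem_univ _), Finset.card_univ, Fintype.card_fin]
        have hJ1 : ({j0} : Finset (Fin p)).card = 1 := Finset.card_singleton j0
        omega
      · -- otherwise G is a star, contradiction
        exfalso
        apply hnotstar
        have h1 : ∀ (j : Fin p) (i i' : Fin m), E i j → E i' j → i = i' := by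
          intro j i i' hE hE'
          by_contra hne
          exact hex ⟨j, i, i', hne, hE, hE'⟩
        have huniq : ∀ i i' : Fin m, i = i' := by
          intro i i'
          obtain ⟨w⟩ := hbase.preconnected (Sum.inl i) (Sum.inl i')
          exact (cw_walk_aux h1 w i' rfl).1 i rfl
        refine ⟨Sum.inl (Sum.inl ⟨0, hm⟩), ?_⟩
        intro u v hadj
        rw [cwGraph, SimpleGraph.fromRel_adj] at hadj
        obtain ⟨-, h | h⟩ := hadj <;>
          rcases h with ⟨u₀, w₀, hE, rfl, rfl⟩ | ⟨i, x, rfl, rfl⟩ | ⟨j, y, c, rfl, rfl⟩ |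
            ⟨j, y, rfl, rfl⟩
        · exact Or.inl (by rw [huniq u₀ ⟨0, hm⟩])
        · exact Or.inl (by rw [huniq i ⟨0, hm⟩])
        · exact absurd y.pos (by simp [ht j])
        · exact absurd y.pos (by simp [ht j])
        · exact Or.inr (by rw [huniq u₀ ⟨0, hm⟩])
        · exact Or.inr (by rw [huniq i ⟨0, hm⟩])
        · exact absurd y.pos (by simp [ht j])
        · exact absurd y.pos (by simp [ht j])
  · -- vNumber ≤ n - 2r
    obtain ⟨A, h1, h2, h3⟩ := cw_witness (t := t) (E := E) hs Finset.univ
      (fun j _ => Finset.mem_univ j) ∅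
      (fun i hi => absurd ⟨(L1 i).choose, Finset.mem_univ _, (L1 i).choose_spec⟩ hi)
    apply key
    refine ⟨A, h1, h2, le_trans h3 ?_⟩
    have hu : (Finset.univ : Finset (Fin p)).card = p := by
      rw [Finset.card_univ, Fintype.card_fin]
    have he : (∅ : Finset (Fin m)).card = 0 := Finset.card_empty
    omega

end PaperRV
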